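/- Let a, b, c, d be nonzero complex numbers with a·d − b·c ≠ 0, and set Ω = a⁻¹·c·d⁻¹·b. Then Ω ≠ 0 and Ω ≠ 1, and the transformation formulas of the dynamical system can be rewritten as follows: d·(ad−bc)⁻¹ = a⁻¹·(1−Ω)⁻¹, −c·(ad−bc)⁻¹ = b⁻¹·(1−Ω⁻¹)⁻¹, −b·(ad−bc)⁻¹ = c⁻¹·(1−Ω⁻¹)⁻¹, and a·(ad−bc)⁻¹ = d⁻¹·(1−Ω)⁻¹. Moreover, setting a' = d·(ad−bc)⁻¹, b' = −c·(ad−bc)⁻¹, c' = −b·(ad−bc)⁻¹, d' = a·(ad−bc)⁻¹, the new circulation satisfies a'·(c')⁻¹·d'·(b')⁻¹ = Ω⁻¹; that is, one evolution step inverts the multiplicative circulation around an active square. -/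

import Mathlib

theorem stmt5 (a b c d Ω a' b' c' d' : ℂ)
    (ha : a ≠ 0) (hb : b ≠ 0) (hc : c ≠ 0) (hd : d ≠ 0)
    (hdet : a * d - b * c ≠ 0)
    (hΩ : Ω = a⁻¹ * c * d⁻¹ * b)
    (ha' : a' = d * (a * d - b * c)⁻¹)
    (hb' : b' = -c * (a * d - b * c)⁻¹)
    (hc' : c' = -b * (a * d - b * c)⁻¹)
    (hd' : d' = a * (a * d - b * c)⁻¹) :
    Ω ≠ 0 ∧ Ω ≠ 1 ∧
    a' = a⁻¹ * (1 - Ω)⁻¹ ∧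
    b' = b⁻¹ * (1 - Ω⁻¹)⁻¹ ∧
    c' = c⁻¹ * (1 - Ω⁻¹)⁻¹ ∧
    d' = d⁻¹ * (1 - Ω)⁻¹ ∧
    a' * c'⁻¹ * d' * b'⁻¹ = Ω⁻¹ := by
  have hΩ0 : Ω ≠ 0 := by
    rw [hΩ]
    exact mul_ne_zero (mul_ne_zero (mul_ne_zero (inv_ne_zero ha) hc) (inv_ne_zero hd)) hb
  have key1 : 1 - Ω = (a * d - b * c) * (a * d)⁻¹ := by
    rw [hΩ]; field_simp
  have key2 : 1 - Ω⁻¹ = -((a * d - b * c) * (b * c)⁻¹) := by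
    rw [hΩ]; field_simp; ring
  have hΩ1 : Ω ≠ 1 := by
    intro h
    rw [h, sub_self] at key1
    exact hdet (by
      have := key1.symm
      field_simp at this
      linear_combination this)
  refine ⟨hΩ0, hΩ1, ?_, ?_, ?_, ?_, ?_⟩
  · rw [ha', key1, mul_inv_rev, inv_inv]
    field_simp
  · rw [hb', key2]
    rw [inv_neg, mul_inv_rev, inv_inv]
    field_simp
  · rw [hc', key2]
    rw [inv_neg, mul_inv_rev, inv_inv]
    field_simp
  · rw [hd', key1, mul_inv_rev, inv_inv]
    field_simp
  · rw [ha', hb', hc', hd', hΩ]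
    field_simp
    ring
    rw [← sub_mul]; exact mul_inv_cancel₀ (by rwa [mul_comm d a])
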